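/- Let G be a simple graph on a finite vertex type V such that G is a tree, let x ∈ V, let S be a set of vertices, let A be a finite set of vertices, and let ρ ≥ 1 be a natural number. Assume that ρ ≤ G.dist x z for every z ∈ A, and that for every s ∈ S, every walk in G from x to s contains some vertex of A in its support. Then there exists g : V → ℝ with g x = 0, g s = 1 for every s ∈ S, and E_G(g) ≤ (|A| : ℝ)/(ρ : ℝ). -/

import Mathlib

open SimpleGraph Finset

private lemma dist_getVert_le' {V : Type*} {G : SimpleGraph V} (hconn : G.Connected)
    {u v : V} (p : G.Walk u v) (i : ℕ) : G.dist u (p.getVert i) ≤ i := by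
  induction p generalizing i with
  | nil =>
    rw [Walk.getVert_of_length_le _ (by simp)]
    simp [SimpleGraph.dist_self]
  | @cons a b c h q ih =>
    cases i with
    | zero => simp
    | succ n =>
      rw [Walk.getVert_cons_succ]
      calc G.dist a (q.getVert n) ≤ G.dist a b + G.dist b (q.getVert n) := hconn.dist_triangle
        _ ≤ 1 + n := add_le_add (by simpa using SimpleGraph.dist_le (Walk.cons h Walk.nil)) (ih n)
        _ = n + 1 := by omega

private lemma min_lip' (p q : ℝ) : |min 1 p - min 1 q| ≤ |p - q| := by
  rcases le_total p 1 with h1 | h1 <;> rcases le_total q 1 with h2 | h2 <;>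
    simp only [min_eq_right, min_eq_left, h1, h2, le_refl] <;>
    (rw [abs_sub_le_iff]; constructor <;> cases abs_cases (p - q) <;> linarith)

/-- Core of the lower bound of Lemma 4.4: on a tree, if every walk from `x` to a
point of `S` passes through a set `A` of vertices, each at distance at least `ρ`
from `x`, then there is a potential `g` with `g x = 0`, `g ≡ 1` on `S` and
energy at most `|A|/ρ`; hence `R(x, S) ≥ ρ/|A|`. -/
theorem tree_resistance_cut_set_bound
    {V : Type*} [Fintype V] (G : SimpleGraph V) [DecidableRel G.Adj]
    (htree : G.IsTree)
    (E : (V → ℝ) → ℝ)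
    (hE : ∀ f, E f = (1 / 2) * ∑ x, ∑ y,
      (if G.Adj x y then (1 : ℝ) else 0) * (f x - f y) ^ 2)
    (x : V) (S : Set V) (A : Finset V) (ρ : ℕ) (hρ : 1 ≤ ρ)
    (hdist : ∀ z ∈ A, ρ ≤ G.dist x z)
    (hcut : ∀ s ∈ S, ∀ w : G.Walk x s, ∃ a ∈ A, a ∈ w.support) :
    ∃ g : V → ℝ, g x = 0 ∧ (∀ s ∈ S, g s = 1) ∧ E g ≤ (A.card : ℝ) / (ρ : ℝ) := by
  classical
  have hconn : G.Connected := htree.isConnected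
  choose P hP using fun v => hconn.exists_walk_length_eq_dist x v
  have hPpath : ∀ v, (P v).IsPath := fun v => (P v).isPath_of_length_eq_dist (hP v)
  have huniq : ∀ (v : V) (q : G.Walk x v), q.IsPath → q = P v :=
    fun v q hq => (htree.existsUnique_path x v).unique hq (hPpath v)
  have htake : ∀ (v w : V) (hw : w ∈ (P v).support), (P v).takeUntil w hw = P w :=
    fun v w hw => huniq w _ ((hPpath v).takeUntil hw)
  have hmemlt : ∀ u v : V, G.Adj u v → v ∈ (P u).support → G.dist x v < G.dist x u := by
    intro u v h hv
    have h1 : ((P u).takeUntil v hv).length + ((P u).dropUntil v hv).length = (P u).length := by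
      rw [← Walk.length_append, Walk.take_spec]
    have h2 : G.dist x v ≤ ((P u).takeUntil v hv).length := by
      rw [← hP v, ← htake u v hv]
    have h3 : ((P u).dropUntil v hv).length ≠ 0 := fun h0 =>
      h.ne' (Walk.eq_of_length_eq_zero h0)
    have h4 := hP u
    omega
  have hstep : ∀ u v : V, ∀ h : G.Adj u v, v ∉ (P u).support →
      P v = (P u).concat h ∧ G.dist x v = G.dist x u + 1 := by
    intro u v h hv
    have hpath : ((P u).concat h).IsPath := by
      rw [Walk.isPath_def, Walk.support_concat]
      exact List.Nodup.append (hPpath u).support_nodup (List.nodup_singleton v)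
        (by simpa using hv)
    have he := huniq v _ hpath
    refine ⟨he.symm, ?_⟩
    rw [← hP v, ← he, Walk.length_concat, hP u]
  have hdi : ∀ u v : V, ∀ h : G.Adj u v,
      (v ∉ (P u).support ∧ P v = (P u).concat h ∧ G.dist x v = G.dist x u + 1) ∨
      (u ∉ (P v).support ∧ P u = (P v).concat h.symm ∧ G.dist x u = G.dist x v + 1) := by
    intro u v h
    by_cases hv : v ∈ (P u).support
    · right
      have hu : u ∉ (P v).support := fun hu =>
        absurd (hmemlt v u h.symm hu) (not_lt.2 (hmemlt u v h hv).le)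
      exact ⟨hu, (hstep v u h.symm hu).1, (hstep v u h.symm hu).2⟩
    · exact Or.inl ⟨hv, (hstep u v h hv).1, (hstep u v h hv).2⟩
  have hgv : ∀ (v : V) (i : ℕ), i ≤ (P v).length → G.dist x ((P v).getVert i) = i := by
    intro v i hi
    have hle : G.dist x ((P v).getVert i) ≤ i := dist_getVert_le' hconn _ i
    have h2 : G.dist ((P v).getVert i) v ≤ (P v).length - i := by
      have e : (P v).getVert i = (P v).reverse.getVert ((P v).length - i) := by
        rw [Walk.getVert_reverse]
        congr 1
        omega
      rw [e, SimpleGraph.dist_comm]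
      exact dist_getVert_le' hconn ((P v).reverse) ((P v).length - i)
    have h3 : G.dist x v ≤ G.dist x ((P v).getVert i) + G.dist ((P v).getVert i) v :=
      hconn.dist_triangle
    have hL := hP v
    omega
  have hinj : ∀ (a v w : V), v ∈ (P a).support → w ∈ (P a).support →
      G.dist x v = G.dist x w → v = w := by
    intro a v w hv hw hvw
    obtain ⟨i, hiv, hil⟩ := Walk.mem_support_iff_exists_getVert.mp hv
    obtain ⟨j, hjv, hjl⟩ := Walk.mem_support_iff_exists_getVert.mp hw
    have hi' : G.dist x v = i := by rw [← hiv]; exact hgv a i hil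
    have hj' : G.dist x w = j := by rw [← hjv]; exact hgv a j hjl
    have hij : i = j := by omega
    rw [← hiv, ← hjv, hij]
  rcases A.eq_empty_or_nonempty with rfl | hA
  · refine ⟨fun _ => 0, rfl, ?_, ?_⟩
    · intro s hs
      obtain ⟨a, ha, -⟩ := hcut s hs (P s)
      exact absurd ha (by simp)
    · rw [hE]
      simp
  have hρpos : (0:ℝ) < ρ := by exact_mod_cast Nat.lt_of_lt_of_le Nat.zero_lt_one hρ
  set s : V → Finset V := fun v => (P v).support.toFinset with hs_def
  have hxs : ∀ v, x ∈ s v := fun v => List.mem_toFinset.mpr (Walk.start_mem_support _)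
  have hcard : ∀ v, (s v).card = G.dist x v + 1 := by
    intro v
    rw [hs_def]
    rw [List.toFinset_card_of_nodup (hPpath v).support_nodup, Walk.length_support, hP v]
  set c : V → V → ℕ := fun a v => ((s v) ∩ (s a)).card with hc_def
  have hc1 : ∀ a v, 1 ≤ c a v := fun a v =>
    Finset.card_pos.mpr ⟨x, Finset.mem_inter.mpr ⟨hxs v, hxs a⟩⟩
  have hsub : ∀ v w : V, w ∈ (P v).support → s w ⊆ s v := by
    intro v w hw z hz
    rw [hs_def] at hz ⊢
    rw [List.mem_toFinset] at hz ⊢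
    rw [← htake v w hw] at hz
    exact Walk.support_takeUntil_subset _ hw hz
  have hcx : ∀ a, c a x = 1 := by
    intro a
    refine le_antisymm ?_ (hc1 a x)
    calc c a x ≤ (s x).card := Finset.card_le_card Finset.inter_subset_left
      _ = 1 := by rw [hcard]; simp [SimpleGraph.dist_self]
  have hcmem : ∀ a v : V, v ∈ (P a).support → c a v = G.dist x v + 1 := by
    intro a v hv
    have h1 : s v ⊆ s a := hsub a v hv
    rw [hc_def]
    simp only
    rw [Finset.inter_eq_left.mpr h1, hcard]
  set h : V → V → ℝ := fun a v => min 1 (((c a v : ℝ) - 1) / ρ) with hh_def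
  have hhx : ∀ a, h a x = 0 := by
    intro a
    rw [hh_def]
    simp [hcx a]
  have hhone : ∀ a v, ρ + 1 ≤ c a v → h a v = 1 := by
    intro a v hcv
    rw [hh_def]
    simp only
    rw [min_eq_left]
    rw [le_div_iff₀ hρpos, one_mul]
    have : (ρ:ℝ) + 1 ≤ (c a v : ℝ) := by exact_mod_cast hcv
    linarith
  have hhle : ∀ a v, h a v ≤ 1 := fun a v => min_le_left _ _
  -- the potential
  set g : V → ℝ := fun v => A.sup' hA (fun a => h a v) with hg_def
  -- energy bound for each h a
  have hEbound : ∀ a ∈ A,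
      (∑ u, ∑ v, (if G.Adj u v then (1:ℝ) else 0) * (h a u - h a v)^2) ≤ 2 / ρ := by
    intro a ha
    set T : Finset (V × V) := Finset.univ.filter
      (fun p => G.Adj p.1 p.2 ∧ G.dist x p.2 = G.dist x p.1 + 1 ∧ p.2 ∈ s a ∧ c a p.1 ≤ ρ)
      with hT_def
    have hTmem : ∀ p : V × V, p ∈ T ↔
        G.Adj p.1 p.2 ∧ G.dist x p.2 = G.dist x p.1 + 1 ∧ p.2 ∈ s a ∧ c a p.1 ≤ ρ := by
      intro p
      rw [hT_def, Finset.mem_filter]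
      simp
    have hTfacts : ∀ u v : V, (u, v) ∈ T →
        ∃ hadj : G.Adj u v, P v = (P u).concat hadj ∧ c a v = c a u + 1 := by
      intro u v hm
      rw [hTmem] at hm
      obtain ⟨hadj, hdd, hvs, hcle⟩ := hm
      replace hdd : G.dist x v = G.dist x u + 1 := hdd
      replace hvs : v ∈ s a := hvs
      replace hcle : c a u ≤ ρ := hcle
      rcases hdi u v hadj with ⟨hns, hPe, hde⟩ | ⟨-, -, hde⟩
      · refine ⟨hadj, hPe, ?_⟩
        have hsv : s v = insert v (s u) := by
          ext z
          rw [hs_def]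
          simp only [List.mem_toFinset, Finset.mem_insert, hPe, Walk.support_concat,
            List.concat_eq_append, List.mem_append, List.mem_singleton]
          tauto
        have hvns : v ∉ s u := fun hm' => hns (by rw [hs_def] at hm'; exact List.mem_toFinset.mp hm')
        rw [hc_def]
        simp only
        rw [hsv, Finset.insert_inter_of_mem hvs,
          Finset.card_insert_of_notMem (fun hm' => hvns (Finset.mem_inter.mp hm').1)]
      · omega
    have hTcard : T.card ≤ ρ := by
      have hmaps : ∀ p ∈ T, c a p.1 ∈ Finset.Icc 1 ρ := by
        intro p hp
        rw [hTmem] at hp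
        exact Finset.mem_Icc.mpr ⟨hc1 a p.1, hp.2.2.2⟩
      refine le_trans (Finset.card_le_card_of_injOn (fun p => c a p.1) hmaps ?_) (by simp)
      rintro ⟨u, v⟩ hp ⟨u', v'⟩ hq hpq
      replace hp : (u, v) ∈ T := hp
      replace hq : (u', v') ∈ T := hq
      replace hpq : c a u = c a u' := hpq
      obtain ⟨hadj1, hPe1, hstep1⟩ := hTfacts u v hp
      obtain ⟨hadj2, hPe2, hstep2⟩ := hTfacts u' v' hq
      rw [hTmem] at hp hq
      have hvm : v ∈ (P a).support := by
        have h' : v ∈ s a := hp.2.2.1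
        rw [hs_def] at h'; exact List.mem_toFinset.mp h'
      have hvm' : v' ∈ (P a).support := by
        have h' : v' ∈ s a := hq.2.2.1
        rw [hs_def] at h'; exact List.mem_toFinset.mp h'
      have e2 : G.dist x v = c a u := by
        have := hcmem a v hvm
        omega
      have e2' : G.dist x v' = c a u' := by
        have := hcmem a v' hvm'
        omega
      have hv : v = v' := hinj a v v' hvm hvm' (by rw [e2, e2', hpq])
      subst hv
      have hu : u = u' := by
        have hcc : (P u).concat hadj1 = (P u').concat hadj2 := by rw [← hPe1, ← hPe2]
        obtain ⟨he, -⟩ := Walk.concat_inj hcc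
        exact he
      rw [hu]
    -- zero off T ∪ swap T
    have hzero : ∀ u v : V, G.Adj u v → (u, v) ∉ T → (v, u) ∉ T → h a u = h a v := by
      have main : ∀ u v : V, ∀ hadj : G.Adj u v, v ∉ (P u).support → P v = (P u).concat hadj →
          G.dist x v = G.dist x u + 1 → (u, v) ∉ T → h a u = h a v := by
        intro u v hadj hns hPe hde hnT
        have hsv : s v = insert v (s u) := by
          ext z
          rw [hs_def]
          simp only [List.mem_toFinset, Finset.mem_insert, hPe, Walk.support_concat,
            List.concat_eq_append, List.mem_append, List.mem_singleton]
          tauto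
        by_cases hvs : v ∈ s a
        · by_cases hcle : c a u ≤ ρ
          · exact absurd ((hTmem (u, v)).mpr ⟨hadj, hde, hvs, hcle⟩) hnT
          · have hcuv : c a u ≤ c a v := by
              rw [hc_def]
              exact Finset.card_le_card (Finset.inter_subset_inter
                (by rw [hsv]; exact Finset.subset_insert _ _) le_rfl)
            rw [hhone a u (by omega), hhone a v (by omega)]
        · have hcc : c a v = c a u := by
            rw [hc_def]
            simp only
            rw [hsv, Finset.insert_inter_of_notMem hvs]
          rw [hh_def]
          simp only [hcc]
      intro u v hadj hnT hnT'
      rcases hdi u v hadj with ⟨h1, h2, h3⟩ | ⟨h1, h2, h3⟩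
      · exact main u v hadj h1 h2 h3 hnT
      · exact (main v u hadj.symm h1 h2 h3 hnT').symm
    -- bound each term on T
    have hsmall : ∀ u v : V, (u, v) ∈ T → (h a u - h a v)^2 ≤ 1 / (ρ:ℝ)^2 := by
      intro u v hm
      obtain ⟨-, -, hstep1⟩ := hTfacts u v hm
      have habs : |h a u - h a v| ≤ 1 / ρ := by
        have := min_lip' (((c a u : ℝ) - 1) / ρ) (((c a v : ℝ) - 1) / ρ)
        rw [hh_def]
        simp only
        refine le_trans this (le_of_eq ?_)
        rw [div_sub_div_same, hstep1]
        push_cast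
        rw [show ((c a u : ℝ) - 1 - ((c a u : ℝ) + 1 - 1)) = -1 by ring]
        rw [abs_div, abs_neg, abs_one, abs_of_pos hρpos]
      calc (h a u - h a v)^2 = |h a u - h a v|^2 := (sq_abs _).symm
        _ ≤ (1/(ρ:ℝ))^2 := pow_le_pow_left₀ (abs_nonneg _) habs 2
        _ = 1 / (ρ:ℝ)^2 := by rw [div_pow, one_pow]
    -- assemble the per-a sum
    set F : V × V → ℝ := fun p => (if G.Adj p.1 p.2 then (1:ℝ) else 0) * (h a p.1 - h a p.2)^2
      with hF_def
    set U : Finset (V × V) := T ∪ T.image Prod.swap with hU_def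
    have hUswap : ∀ u v : V, (u, v) ∈ U ↔ (u, v) ∈ T ∨ (v, u) ∈ T := by
      intro u v
      rw [hU_def, Finset.mem_union]
      constructor
      · rintro (hm | hm)
        · exact Or.inl hm
        · obtain ⟨q, hq, hqe⟩ := Finset.mem_image.mp hm
          right
          have : q = (v, u) := by
            rw [Prod.ext_iff] at hqe ⊢
            simp only [Prod.swap] at hqe
            exact ⟨hqe.2, hqe.1⟩
          rwa [this] at hq
      · rintro (hm | hm)
        · exact Or.inl hm
        · exact Or.inr (Finset.mem_image.mpr ⟨(v, u), hm, rfl⟩)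
    have hsum1 : (∑ u, ∑ v, (if G.Adj u v then (1:ℝ) else 0) * (h a u - h a v)^2)
        = ∑ p ∈ Finset.univ ×ˢ Finset.univ, F p := by
      rw [Finset.sum_product]
    have hsum2 : ∑ p ∈ Finset.univ ×ˢ Finset.univ, F p = ∑ p ∈ U, F p := by
      refine (Finset.sum_subset (Finset.subset_univ U |>.trans (by simp)) ?_).symm
      rintro ⟨u, v⟩ - hnU
      rw [hF_def]
      simp only
      by_cases hadj : G.Adj u v
      · rw [hUswap] at hnU
        push_neg at hnU
        rw [hzero u v hadj hnU.1 hnU.2]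
        simp
      · simp [hadj]
    have hsum3 : ∑ p ∈ U, F p ≤ (U.card : ℝ) * (1 / (ρ:ℝ)^2) := by
      rw [← nsmul_eq_mul]
      refine Finset.sum_le_card_nsmul U F _ ?_
      rintro ⟨u, v⟩ hm
      rw [hUswap] at hm
      rw [hF_def]
      simp only
      by_cases hadj : G.Adj u v
      · rw [if_pos hadj, one_mul]
        rcases hm with hm | hm
        · exact hsmall u v hm
        · have := hsmall v u hm
          calc (h a u - h a v)^2 = (h a v - h a u)^2 := by ring
            _ ≤ 1 / (ρ:ℝ)^2 := this
      · rw [if_neg hadj, zero_mul]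
        positivity
    have hUcard : (U.card : ℝ) ≤ 2 * ρ := by
      have h1 : U.card ≤ T.card + (T.image Prod.swap).card := by
        rw [hU_def]; exact Finset.card_union_le _ _
      have h2 : (T.image Prod.swap).card ≤ T.card := Finset.card_image_le
      have : U.card ≤ 2 * ρ := by omega
      exact_mod_cast this
    rw [hsum1, hsum2]
    calc ∑ p ∈ U, F p ≤ (U.card : ℝ) * (1 / (ρ:ℝ)^2) := hsum3
      _ ≤ (2 * ρ) * (1 / (ρ:ℝ)^2) := by
          apply mul_le_mul_of_nonneg_right hUcard
          positivity
      _ = 2 / ρ := by field_simp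
  -- now assemble
  refine ⟨g, ?_, ?_, ?_⟩
  · refine le_antisymm (Finset.sup'_le hA _ fun a ha => (hhx a).le) ?_
    obtain ⟨a, ha⟩ := hA
    calc (0:ℝ) = h a x := (hhx a).symm
      _ ≤ g x := Finset.le_sup' (fun a => h a x) ha
  · intro t ht
    obtain ⟨a, haA, hat⟩ := hcut t ht (P t)
    have h1 : h a t = 1 := by
      refine hhone a t ?_
      have hc : c a t = G.dist x a + 1 := by
        have h1' : s a ⊆ s t := hsub t a hat
        rw [hc_def]
        simp only
        rw [Finset.inter_eq_right.mpr h1', hcard]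
      rw [hc]
      have := hdist a haA
      omega
    refine le_antisymm (Finset.sup'_le hA _ fun a' _ => hhle a' t) ?_
    calc (1:ℝ) = h a t := h1.symm
      _ ≤ g t := Finset.le_sup' (fun a => h a t) haA
  · rw [hE g]
    have hptwise : ∀ u v : V, (if G.Adj u v then (1:ℝ) else 0) * (g u - g v)^2 ≤
        ∑ a ∈ A, (if G.Adj u v then (1:ℝ) else 0) * (h a u - h a v)^2 := by
      intro u v
      by_cases hadj : G.Adj u v
      · simp only [if_pos hadj, one_mul]
        obtain ⟨a1, ha1, he1⟩ := Finset.exists_mem_eq_sup' hA (fun a => h a u)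
        obtain ⟨a2, ha2, he2⟩ := Finset.exists_mem_eq_sup' hA (fun a => h a v)
        have hgu1 : g u = h a1 u := he1
        have hgv2 : g v = h a2 v := he2
        have hle1 : h a1 v ≤ g v := Finset.le_sup' (fun a => h a v) ha1
        have hle2 : h a2 u ≤ g u := Finset.le_sup' (fun a => h a u) ha2
        rcases le_total (g u) (g v) with hle | hle
        · calc (g u - g v)^2 = (g v - g u)^2 := by ring
            _ ≤ (h a2 v - h a2 u)^2 := by
                apply pow_le_pow_left₀ (by linarith)
                linarith
            _ = (h a2 u - h a2 v)^2 := by ring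
            _ ≤ ∑ a ∈ A, (h a u - h a v)^2 :=
                Finset.single_le_sum (f := fun a => (h a u - h a v)^2) (fun a _ => sq_nonneg _) ha2
        · calc (g u - g v)^2 ≤ (h a1 u - h a1 v)^2 := by
                apply pow_le_pow_left₀ (by linarith)
                linarith
            _ ≤ ∑ a ∈ A, (h a u - h a v)^2 :=
                Finset.single_le_sum (f := fun a => (h a u - h a v)^2) (fun a _ => sq_nonneg _) ha1
      · simp [hadj]
    calc (1/2 : ℝ) * ∑ u, ∑ v, (if G.Adj u v then (1:ℝ) else 0) * (g u - g v)^2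
        ≤ (1/2 : ℝ) * ∑ u, ∑ v, ∑ a ∈ A, (if G.Adj u v then (1:ℝ) else 0) * (h a u - h a v)^2 := by
          refine mul_le_mul_of_nonneg_left ?_ (by norm_num)
          exact Finset.sum_le_sum fun u _ => Finset.sum_le_sum fun v _ => hptwise u v
      _ = ∑ a ∈ A, (1/2 : ℝ) * ∑ u, ∑ v, (if G.Adj u v then (1:ℝ) else 0) * (h a u - h a v)^2 := by
          have h1 : ∀ u : V, (∑ v, ∑ a ∈ A, (if G.Adj u v then (1:ℝ) else 0) * (h a u - h a v)^2)
              = ∑ a ∈ A, ∑ v, (if G.Adj u v then (1:ℝ) else 0) * (h a u - h a v)^2 :=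
            fun u => Finset.sum_comm
          simp_rw [h1]
          rw [Finset.sum_comm, Finset.mul_sum]
      _ ≤ ∑ a ∈ A, (1/2 : ℝ) * (2 / (ρ:ℝ)) := by
          refine Finset.sum_le_sum fun a ha => ?_
          exact mul_le_mul_of_nonneg_left (hEbound a ha) (by norm_num)
      _ = (A.card : ℝ) / (ρ:ℝ) := by
          rw [Finset.sum_const, nsmul_eq_mul]
          field_simp
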